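/- At every minimizer (t*, p*, y*) of the joint routing problem, for every node n and any two data paths F and G that both start at n, each end at a destination node, and have p*_l > 0 and t*_l > 0 on every link, the path sums are equal: ∑_{l∈F} (1/2)·ln(1 + p*_l/σ_l) · ((1/2)·ln(1 + p*_l/σ_l) − t*_l)^{−2} = ∑_{l∈G} (1/2)·ln(1 + p*_l/σ_l) · ((1/2)·ln(1 + p*_l/σ_l) − t*_l)^{−2}. -/

import Mathlib

open BigOperators ENNReal


section JRAuxLemmas

theorem jrAuxA {α : Type*} [Fintype α] [DecidableEq α] (P : List α) (g : α → ℝ) :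
    ∑ l, (P.count l : ℝ) * g l = (P.map g).sum := by
  induction P with
  | nil => simp
  | cons x P ih =>
    simp only [List.count_cons, List.map_cons, List.sum_cons]
    push_cast
    rw [← ih]
    rw [show ∀ f h : α → ℝ, ∑ l, (f l + h l) * g l = ∑ l, f l * g l + ∑ l, h l * g l from
      fun f h => by rw [← Finset.sum_add_distrib]; congr 1; ext l; ring]
    rw [add_comm]
    congr 1
    simp [Finset.sum_ite_eq]

theorem jrAuxB {L N : Type*} [DecidableEq L] [DecidableEq N] (s e : L → N)
    (P : List L) (hne : P ≠ []) (hch : P.Chain' (fun l₁ l₂ => e l₁ = s l₂)) (m : N) :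
    ((P.map s).count m : ℤ) - (P.map e).count m =
      (if s (P.head hne) = m then 1 else 0) - (if e (P.getLast hne) = m then 1 else 0) := by
  induction P with
  | nil => simp at hne
  | cons x P ih =>
    cases P with
    | nil => simp [List.count_cons]; rfl
    | cons y rest =>
      have h1 : e x = s y := (List.isChain_cons_cons.mp hch).1
      have h2 := ih (by simp) (List.isChain_cons_cons.mp hch).2
      simp only [List.map_cons, List.count_cons, beq_iff_eq, List.head_cons,
        List.getLast_cons (by simp : (y :: rest) ≠ [])] at *
      rw [h1]
      push_cast at *
      split_ifs at h2 ⊢ <;> simp_all <;> omega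

theorem jrAuxC {L N : Type*} [Fintype L] [DecidableEq L] [DecidableEq N] (s : L → N)
    (P : List L) (m : N) :
    ∑ l ∈ Finset.univ.filter (fun l => s l = m), P.count l = (P.map s).count m := by
  induction P with
  | nil => simp
  | cons x P ih =>
    simp only [List.count_cons, List.map_cons, beq_iff_eq]
    rw [Finset.sum_add_distrib, ih]
    congr 1
    rw [Finset.sum_ite_eq (Finset.univ.filter (fun l => s l = m)) x (fun _ => 1)]
    simp [eq_comm]

end JRAuxLemmas

/-- The joint routing problem: nodes `N`, data links `L` (start node, end node, noise
power `σ l > 0`), energy links `Q` (start node, end node, efficiency `α q ∈ (0,1]`),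
harvested energies `E n ≥ 0`, designated destination nodes `dest`, and exogenous
arrivals `s n ≥ 0` at non-destination nodes. -/
structure JNet where
  N : Type
  L : Type
  Q : Type
  [fintypeN : Fintype N]
  [fintypeL : Fintype L]
  [fintypeQ : Fintype Q]
  [decEqN : DecidableEq N]
  startD : L → N
  endD : L → N
  startE : Q → N
  endE : Q → N
  α : Q → ℝ
  σ : L → ℝ
  E : N → ℝ
  dest : N → Prop
  [decDest : DecidablePred dest]
  s : N → ℝ
  hα : ∀ q, 0 < α q ∧ α q ≤ 1
  hσ : ∀ l, 0 < σ l
  hE : ∀ n, 0 ≤ E n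
  hs : ∀ n, ¬ dest n → 0 ≤ s n

attribute [instance] JNet.fintypeN JNet.fintypeL JNet.fintypeQ JNet.decEqN JNet.decDest

/-- A triple `(t, p, y)` is feasible: nonnegative flows, capacity constraints
`p_l ≥ σ_l (e^{2 t_l} − 1)`, nonnegative energy transfers, the energy constraint at
every node, and flow conservation at every non-destination node. -/
def JNet.Feasible (net : JNet) (t p : net.L → ℝ) (y : net.Q → ℝ) : Prop :=
  (∀ l, 0 ≤ t l) ∧
  (∀ l, net.σ l * (Real.exp (2 * t l) - 1) ≤ p l) ∧
  (∀ q, 0 ≤ y q) ∧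
  (∀ n : net.N,
    (∑ l ∈ Finset.univ.filter (fun l => net.startD l = n), p l) +
      (∑ q ∈ Finset.univ.filter (fun q => net.startE q = n), y q) ≤
    net.E n + ∑ q ∈ Finset.univ.filter (fun q => net.endE q = n), net.α q * y q) ∧
  (∀ n : net.N, ¬ net.dest n →
    (∑ l ∈ Finset.univ.filter (fun l => net.startD l = n), t l) -
      (∑ l ∈ Finset.univ.filter (fun l => net.endD l = n), t l) = net.s n)

/-- The delay `h(p, t) = t / ((1/2)·ln(1 + p/σ) − t)` on a single link, taken to
be `0` when `t = 0` and `+∞` when `t > 0` and `(1/2)·ln(1 + p/σ) ≤ t`. -/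
noncomputable def linkDelay (σ p t : ℝ) : ℝ≥0∞ :=
  if t = 0 then 0
  else if t < (1 / 2) * Real.log (1 + p / σ) then
    ENNReal.ofReal (t / ((1 / 2) * Real.log (1 + p / σ) - t))
  else ⊤


theorem jrLinkDelay_eq (σ p t : ℝ)
    (h : t = 0 ∨ (0 < t ∧ t < (1 / 2) * Real.log (1 + p / σ))) :
    linkDelay σ p t = ENNReal.ofReal (t / ((1 / 2) * Real.log (1 + p / σ) - t)) := by
  rcases h with h | ⟨h1, h2⟩
  · subst h; simp [linkDelay]
  · rw [linkDelay, if_neg (ne_of_gt h1), if_pos h2]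

theorem jrLinkDelay_lt (σ p t : ℝ) (h : linkDelay σ p t ≠ ⊤) (ht : 0 < t) :
    t < (1 / 2) * Real.log (1 + p / σ) := by
  by_contra hc
  rw [linkDelay, if_neg (ne_of_gt ht), if_neg hc] at h
  exact h rfl

/-- The network delay `D(t, p) = ∑_l h_l(p_l, t_l)`. -/
noncomputable def JNet.Delay (net : JNet) (t p : net.L → ℝ) : ℝ≥0∞ :=
  ∑ l, linkDelay (net.σ l) (p l) (t l)

/-- A minimizer of the joint routing problem: a feasible triple with finite delay
minimizing the delay over all feasible triples. -/
def JNet.IsMinimizer (net : JNet) (t p : net.L → ℝ) (y : net.Q → ℝ) : Prop :=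
  net.Feasible t p y ∧ net.Delay t p < ⊤ ∧
    ∀ t' p' y', net.Feasible t' p' y' → net.Delay t p ≤ net.Delay t' p'

/-- The marginal quantity
`g(p) = (t/(2σ)) · ((1/2)·ln(1 + p/σ) − t)^{−2} · (1 + p/σ)^{−1}`, with the
convention that it is `0` when `t = 0`. -/
noncomputable def gMargJ (t σ p : ℝ) : ℝ :=
  if t = 0 then 0
  else t / (2 * σ) / ((1 / 2) * Real.log (1 + p / σ) - t) ^ 2 / (1 + p / σ)

/-- A data path from node `a` to a destination: a nonempty finite sequence of data
links starting at `a`, consecutively matched, and ending at a destination node. -/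
def JNet.IsDataPath (net : JNet) (a : net.N) (P : List net.L) : Prop :=
  ∃ hne : P ≠ [],
    net.startD (P.head hne) = a ∧
    net.dest (net.endD (P.getLast hne)) ∧
    P.Chain' (fun l₁ l₂ => net.endD l₁ = net.startD l₂)

/-- At every minimizer `(t*, p*, y*)` of the joint routing problem, for
every node `n` and any two data paths `F, G` starting at `n`, ending at destination
nodes, and with `p*_l > 0` and `t*_l > 0` on every link, the path sums
`∑_{l∈path} (1/2)·ln(1 + p*_l/σ_l) · ((1/2)·ln(1 + p*_l/σ_l) − t*_l)^{−2}` coincide. -/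
theorem joint_minimizer_path_sums_equal (net : JNet)
    (tstar pstar : net.L → ℝ) (ystar : net.Q → ℝ)
    (hmin : net.IsMinimizer tstar pstar ystar) :
    ∀ (n : net.N) (F G : List net.L),
      net.IsDataPath n F → net.IsDataPath n G →
      (∀ l ∈ F, 0 < pstar l ∧ 0 < tstar l) →
      (∀ l ∈ G, 0 < pstar l ∧ 0 < tstar l) →
      (F.map fun l => (1 / 2) * Real.log (1 + pstar l / net.σ l) /
          ((1 / 2) * Real.log (1 + pstar l / net.σ l) - tstar l) ^ 2).sum =
      (G.map fun l => (1 / 2) * Real.log (1 + pstar l / net.σ l) /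
          ((1 / 2) * Real.log (1 + pstar l / net.σ l) - tstar l) ^ 2).sum := by
  classical
  obtain ⟨⟨ht0, hcap, hy0, hEn, hcons⟩, hfin, hopt⟩ := hmin
  intro n F G hF hG hFpos hGpos
  obtain ⟨hFne, hFstart, hFdest, hFch⟩ := hF
  obtain ⟨hGne, hGstart, hGdest, hGch⟩ := hG
  set c : net.L → ℝ := fun l => (1 / 2) * Real.log (1 + pstar l / net.σ l) with hc
  have hcl : ∀ l, c l = (1 / 2) * Real.log (1 + pstar l / net.σ l) := fun l => by rw [hc]
  -- basic positivity facts
  have hp0 : ∀ l, 0 ≤ pstar l := by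
    intro l
    have h1 := hcap l
    have h2 : (1 : ℝ) ≤ Real.exp (2 * tstar l) := Real.one_le_exp (by linarith [ht0 l])
    nlinarith [net.hσ l]
  have hpos : ∀ l, (0 : ℝ) < 1 + pstar l / net.σ l := by
    intro l
    have := div_nonneg (hp0 l) (le_of_lt (net.hσ l))
    linarith
  have htlt : ∀ l, 0 < tstar l → tstar l < c l := by
    intro l hl
    rw [hcl]
    refine jrLinkDelay_lt _ _ _ ?_ hl
    have h := (ENNReal.sum_lt_top.mp hfin) l (Finset.mem_univ l)
    exact ne_of_lt h
  -- the perturbation direction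
  set d : net.L → ℝ := fun l => (G.count l : ℝ) - (F.count l : ℝ) with hd
  set S : Finset net.L := F.toFinset ∪ G.toFinset with hSdef
  have hS : S.Nonempty := by
    obtain ⟨x, hx⟩ := List.exists_mem_of_ne_nil F hFne
    exact ⟨x, Finset.mem_union_left _ (List.mem_toFinset.mpr hx)⟩
  have hmem : ∀ l, d l ≠ 0 → l ∈ S := by
    intro l hl
    by_contra hcon
    rw [hSdef, Finset.mem_union] at hcon
    push_neg at hcon
    have h1 : F.count l = 0 := List.count_eq_zero.mpr (fun h => hcon.1 (List.mem_toFinset.mpr h))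
    have h2 : G.count l = 0 := List.count_eq_zero.mpr (fun h => hcon.2 (List.mem_toFinset.mpr h))
    simp only [hd, h1, h2] at hl
    simp at hl
  have hSt : ∀ l ∈ S, 0 < tstar l := by
    intro l hl
    rw [hSdef, Finset.mem_union] at hl
    rcases hl with h | h
    · exact (hFpos l (List.mem_toFinset.mp h)).2
    · exact (hGpos l (List.mem_toFinset.mp h)).2
  have hd0 : ∀ l, tstar l = 0 → d l = 0 := by
    intro l hl
    by_contra hcon
    exact absurd hl (ne_of_gt (hSt l (hmem l hcon)))
  set m : ℝ := S.inf' hS (fun l => min (tstar l) (c l - tstar l)) with hmdef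
  have hm_le : ∀ l ∈ S, m ≤ tstar l ∧ m ≤ c l - tstar l := by
    intro l hl
    have h := Finset.inf'_le (fun l => min (tstar l) (c l - tstar l)) hl
    rw [← hmdef] at h
    exact ⟨le_trans h (min_le_left _ _), le_trans h (min_le_right _ _)⟩
  have hm_pos : 0 < m := by
    rw [hmdef, Finset.lt_inf'_iff]
    intro l hl
    exact lt_min (hSt l hl) (by linarith [htlt l (hSt l hl)])
  set M : ℝ := (F.length : ℝ) + (G.length : ℝ) + 1 with hMdef
  have hM1 : (1 : ℝ) ≤ M := by
    have h1 : (0:ℝ) ≤ (F.length : ℝ) := Nat.cast_nonneg _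
    have h2 : (0:ℝ) ≤ (G.length : ℝ) := Nat.cast_nonneg _
    rw [hMdef]; linarith
  have hMd : ∀ l, |d l| ≤ M := by
    intro l
    have hcF : (F.count l : ℝ) ≤ (F.length : ℝ) := by exact_mod_cast F.count_le_length (a := l)
    have hcG : (G.count l : ℝ) ≤ (G.length : ℝ) := by exact_mod_cast G.count_le_length (a := l)
    have h0F : (0 : ℝ) ≤ (F.count l : ℝ) := Nat.cast_nonneg _
    have h0G : (0 : ℝ) ≤ (G.count l : ℝ) := Nat.cast_nonneg _
    simp only [hd, hMdef, abs_le]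
    constructor <;> linarith
  set δ : ℝ := m / M with hδdef
  have hδ : 0 < δ := div_pos hm_pos (by linarith)
  have hεd : ∀ ε : ℝ, |ε| < δ → ∀ l, |ε * d l| < m := by
    intro ε hε l
    have h1 : |ε * d l| = |ε| * |d l| := abs_mul _ _
    have h2 : |ε| * |d l| ≤ |ε| * M := mul_le_mul_of_nonneg_left (hMd l) (abs_nonneg _)
    have h3 : |ε| * M < δ * M := mul_lt_mul_of_pos_right hε (by linarith)
    have h4 : δ * M = m := div_mul_cancel₀ m (by linarith)
    linarith
  -- the key dichotomy after perturbation
  have key : ∀ ε : ℝ, |ε| < δ → ∀ l,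
      (tstar l = 0 ∧ d l = 0) ∨
      (0 < tstar l + ε * d l ∧ tstar l + ε * d l < c l) := by
    intro ε hε l
    by_cases hdl : d l = 0
    · by_cases ht : tstar l = 0
      · exact Or.inl ⟨ht, hdl⟩
      · right
        have hpos' : 0 < tstar l := lt_of_le_of_ne (ht0 l) (Ne.symm ht)
        rw [hdl]
        constructor
        · linarith
        · have := htlt l hpos'; linarith
    · right
      have hlS := hmem l hdl
      obtain ⟨h1, h2⟩ := hm_le l hlS
      have habs := hεd ε hε l
      have hle := le_abs_self (ε * d l)
      have hge := neg_abs_le (ε * d l)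
      constructor <;> linarith
  -- feasibility of the perturbed flow
  have feas : ∀ ε : ℝ, |ε| < δ →
      net.Feasible (fun l => tstar l + ε * d l) pstar ystar := by
    intro ε hε
    refine ⟨?_, ?_, hy0, hEn, ?_⟩
    · intro l
      show 0 ≤ tstar l + ε * d l
      rcases key ε hε l with ⟨h0, hdl⟩ | ⟨h1, h2⟩
      · rw [h0, hdl]; simp
      · linarith
    · intro l
      show net.σ l * (Real.exp (2 * (tstar l + ε * d l)) - 1) ≤ pstar l
      rcases key ε hε l with ⟨h0, hdl⟩ | ⟨h1, h2⟩
      · have heq : tstar l + ε * d l = tstar l := by rw [hdl]; ring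
        rw [heq]
        exact hcap l
      · rw [hcl] at h2
        have hexp : Real.exp (2 * (tstar l + ε * d l)) < 1 + pstar l / net.σ l := by
          rw [← Real.exp_log (hpos l)]
          apply Real.exp_lt_exp.mpr
          linarith
        have hσl := net.hσ l
        have hps : net.σ l * (1 + pstar l / net.σ l) = net.σ l + pstar l := by
          field_simp
        nlinarith [mul_lt_mul_of_pos_left hexp hσl]
    · intro n' hn'
      have hsumc : ∀ (f : net.L → net.N) (P : List net.L),
          ∑ l ∈ Finset.univ.filter (fun l => f l = n'), (P.count l : ℝ)
            = ((P.map f).count n' : ℝ) := by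
        intro f P
        rw [← Nat.cast_sum]
        exact_mod_cast congrArg (Nat.cast : ℕ → ℝ) (jrAuxC f P n')
      have hFe : net.endD (F.getLast hFne) ≠ n' := fun h => hn' (h ▸ hFdest)
      have hGe : net.endD (G.getLast hGne) ≠ n' := fun h => hn' (h ▸ hGdest)
      have hFz : ((F.map net.startD).count n' : ℝ) - ((F.map net.endD).count n' : ℝ)
          = if n = n' then 1 else 0 := by
        have h := jrAuxB net.startD net.endD F hFne hFch n'
        rw [hFstart, if_neg hFe] at h
        have h2 := congrArg (Int.cast : ℤ → ℝ) h
        push_cast at h2 ⊢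
        linarith [h2]
      have hGz : ((G.map net.startD).count n' : ℝ) - ((G.map net.endD).count n' : ℝ)
          = if n = n' then 1 else 0 := by
        have h := jrAuxB net.startD net.endD G hGne hGch n'
        rw [hGstart, if_neg hGe] at h
        have h2 := congrArg (Int.cast : ℤ → ℝ) h
        push_cast at h2 ⊢
        linarith [h2]
      have hds : ∑ l ∈ Finset.univ.filter (fun l => net.startD l = n'), d l
          = ((G.map net.startD).count n' : ℝ) - ((F.map net.startD).count n' : ℝ) := by
        simp only [hd]
        rw [Finset.sum_sub_distrib, hsumc net.startD G, hsumc net.startD F]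
      have hde : ∑ l ∈ Finset.univ.filter (fun l => net.endD l = n'), d l
          = ((G.map net.endD).count n' : ℝ) - ((F.map net.endD).count n' : ℝ) := by
        simp only [hd]
        rw [Finset.sum_sub_distrib, hsumc net.endD G, hsumc net.endD F]
      have hcs := hcons n' hn'
      have hΔ : ∑ l ∈ Finset.univ.filter (fun l => net.startD l = n'), d l
          = ∑ l ∈ Finset.univ.filter (fun l => net.endD l = n'), d l := by
        rw [hds, hde]; linarith [hFz, hGz]
      simp only [Finset.sum_add_distrib, ← Finset.mul_sum]
      rw [hΔ]
      linarith
  -- the real-valued delay function along the perturbation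
  set φ : ℝ → ℝ := fun ε => ∑ l, (tstar l + ε * d l) / (c l - (tstar l + ε * d l))
    with hφdef
  have hterm_nonneg : ∀ ε : ℝ, |ε| < δ → ∀ l,
      0 ≤ (tstar l + ε * d l) / (c l - (tstar l + ε * d l)) := by
    intro ε hε l
    rcases key ε hε l with ⟨h0, hdl⟩ | ⟨h1, h2⟩
    · rw [h0, hdl]; simp
    · exact div_nonneg (le_of_lt h1) (by linarith)
  have hφ0 : ∀ ε : ℝ, |ε| < δ → 0 ≤ φ ε := by
    intro ε hε
    rw [hφdef]
    exact Finset.sum_nonneg (fun l _ => hterm_nonneg ε hε l)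
  have hrep : ∀ ε : ℝ, |ε| < δ →
      net.Delay (fun l => tstar l + ε * d l) pstar = ENNReal.ofReal (φ ε) := by
    intro ε hε
    rw [hφdef]
    simp only [JNet.Delay]
    rw [ENNReal.ofReal_sum_of_nonneg (fun l _ => hterm_nonneg ε hε l)]
    refine Finset.sum_congr rfl (fun l _ => ?_)
    have h := jrLinkDelay_eq (net.σ l) (pstar l) (tstar l + ε * d l) ?_
    · rw [h, hcl]
    · rcases key ε hε l with ⟨h0, hdl⟩ | ⟨h1, h2⟩
      · left; rw [h0, hdl]; ring
      · right; rw [hcl] at h2; exact ⟨h1, h2⟩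
  have hzero : |(0 : ℝ)| < δ := by simpa using hδ
  have hDelay0 : net.Delay tstar pstar = ENNReal.ofReal (φ 0) := by
    have h := hrep 0 hzero
    have h2 : (fun l => tstar l + 0 * d l) = tstar := by funext l; ring
    rw [h2] at h
    exact h
  -- local minimality of φ at 0
  have hlocal : IsLocalMin φ 0 := by
    have hev : ∀ᶠ ε in nhds (0 : ℝ), |ε| < δ := by
      have := eventually_abs_sub_lt (0 : ℝ) hδ
      simpa using this
    refine hev.mono (fun ε hε => ?_)
    have h := hopt _ pstar ystar (feas ε hε)
    rw [hDelay0, hrep ε hε] at h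
    exact (ENNReal.ofReal_le_ofReal_iff (hφ0 ε hε)).mp h
  -- derivative of φ at 0
  have hderiv : HasDerivAt φ (∑ l, d l * (c l / (c l - tstar l) ^ 2)) 0 := by
    rw [hφdef]
    apply HasDerivAt.fun_sum
    intro l _
    by_cases hdl : d l = 0
    · simp only [hdl, mul_zero, add_zero, zero_mul]
      exact hasDerivAt_const _ _
    · have hlS := hmem l hdl
      have ht := hSt l hlS
      have htc := htlt l ht
      have hne : c l - (tstar l + 0 * d l) ≠ 0 := by
        simp only [zero_mul, add_zero]
        linarith
      have hnum : HasDerivAt (fun ε : ℝ => tstar l + ε * d l) (d l) 0 := by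
        simpa using ((hasDerivAt_id (0 : ℝ)).mul_const (d l)).const_add (tstar l)
      have hden : HasDerivAt (fun ε : ℝ => c l - (tstar l + ε * d l)) (-(d l)) 0 :=
        hnum.const_sub (c l)
      have h := hnum.div hden hne
      convert h using 1
      · rfl
      · rfl
      simp only [zero_mul, add_zero]
      have h3 : c l - tstar l ≠ 0 := by linarith
      field_simp
      ring
  have hzero' : ∑ l, d l * (c l / (c l - tstar l) ^ 2) = 0 :=
    hlocal.hasDerivAt_eq_zero hderiv
  -- conclude
  have hsplit : ∑ l, d l * (c l / (c l - tstar l) ^ 2)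
      = (G.map (fun l => c l / (c l - tstar l) ^ 2)).sum
        - (F.map (fun l => c l / (c l - tstar l) ^ 2)).sum := by
    rw [← jrAuxA G (fun l => c l / (c l - tstar l) ^ 2),
      ← jrAuxA F (fun l => c l / (c l - tstar l) ^ 2),
      ← Finset.sum_sub_distrib]
    refine Finset.sum_congr rfl (fun l _ => ?_)
    simp only [hd]
    ring
  have hfuneq : (fun l => (1 / 2) * Real.log (1 + pstar l / net.σ l) /
      ((1 / 2) * Real.log (1 + pstar l / net.σ l) - tstar l) ^ 2)
      = fun l => c l / (c l - tstar l) ^ 2 := by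
    funext l
    rw [hcl]
  rw [hfuneq]
  linarith [hzero', hsplit]
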